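/- arXiv:1801.09852 — 6 statements merged into one kernel-verified Lean document; each statement's English description precedes it below -/
import Mathlib

section
/- Let R be a graded ring with R_0 = k a field of characteristic 0 that has enough derivations, let E be a set of homogeneous elements of R_+ whose images in R_+/R_+^2 are k-linearly independent and suppose E ∖ {x} is algebraically independent with x homogeneous. Then no relation 0 = Σ_{i=0}^n a_i x^i with a_i in the subalgebra generated by E ∖ {x} and a_n ≠ 0 can hold; i.e., E is algebraically independent. -/
set_option linter.unusedSectionVars false
set_option maxHeartbeats 1000000

/-- A derivation `D` on a graded algebra is homogeneous of negative degree `-e` (with `e > 0`)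
if it sends elements of degree `m` to elements of degree `m - e` (and to `0` when `m < e`). -/
def IsHomogeneousNegDerivation {k R : Type*} [CommRing k] [CommRing R] [Algebra k R]
    (𝒜 : ℕ → Submodule k R) (D : Derivation k R R) (e : ℕ) : Prop :=
  0 < e ∧ ∀ (m : ℕ) (y : R), y ∈ 𝒜 m →
    (if e ≤ m then D y ∈ 𝒜 (m - e) else D y = 0)

/-- `R` has enough derivations. -/
def HasEnoughDerivations {k R : Type*} [CommRing k] [CommRing R] [Algebra k R]
    (𝒜 : ℕ → Submodule k R) : Prop :=
  ∀ (x : R) (n : ℕ), 0 < n → x ∈ 𝒜 n → x ≠ 0 →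
    ∃ (D : Derivation k R R) (e : ℕ), IsHomogeneousNegDerivation 𝒜 D e ∧ D x ≠ 0

section Aux

open DirectSum Finset

variable {k R : Type*} [Field k] [CommRing R] [Algebra k R]

def GSet (𝒜 : ℕ → Submodule k R) (d : ℕ) (U : Submodule k R) : Set R :=
  {r | ∃ m, 0 < m ∧ m < d ∧ r ∈ 𝒜 m} ∪ (U : Set R)

def Rplus (𝒜 : ℕ → Submodule k R) : Ideal R :=
  Ideal.span {x : R | ∃ n, 0 < n ∧ x ∈ 𝒜 n}

variable (𝒜 : ℕ → Submodule k R) [GradedAlgebra 𝒜]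

lemma mem_adjoinG_of_low (h0 : ∀ x ∈ 𝒜 0, ∃ c : k, algebraMap k R c = x)
    {d m : ℕ} (U : Submodule k R) (hm : m < d) {r : R} (hr : r ∈ 𝒜 m) :
    r ∈ Algebra.adjoin k (GSet 𝒜 d U) := by
  rcases Nat.eq_zero_or_pos m with h | h
  · subst h
    obtain ⟨c, hc⟩ := h0 r hr
    exact hc ▸ Subalgebra.algebraMap_mem _ c
  · exact Algebra.subset_adjoin (Or.inl ⟨m, h, hm, hr⟩)

lemma adjoinG_graded (h0 : ∀ x ∈ 𝒜 0, ∃ c : k, algebraMap k R c = x)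
    {d : ℕ} (U : Submodule k R) (hU : U ≤ 𝒜 d) {a : R}
    (ha : a ∈ Algebra.adjoin k (GSet 𝒜 d U)) (M : ℕ) :
    (DirectSum.decompose 𝒜 a M : R) ∈ Algebra.adjoin k (GSet 𝒜 d U) := by
  classical
  have homog : ∀ {m : ℕ} {r : R}, r ∈ 𝒜 m → r ∈ Algebra.adjoin k (GSet 𝒜 d U) →
      ∀ M, (DirectSum.decompose 𝒜 r M : R) ∈ Algebra.adjoin k (GSet 𝒜 d U) := by
    intro m r hrm hrC M
    by_cases h : m = M
    · subst h; rw [DirectSum.decompose_of_mem_same 𝒜 hrm]; exact hrC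
    · rw [DirectSum.decompose_of_mem_ne 𝒜 hrm h]; exact zero_mem _
  refine Algebra.adjoin_induction
    (p := fun a _ => ∀ M, (DirectSum.decompose 𝒜 a M : R) ∈ Algebra.adjoin k (GSet 𝒜 d U))
    ?_ ?_ ?_ ?_ ha M
  · intro r hr M
    rcases hr with ⟨m, hm0, hmd, hrm⟩ | hrU
    · exact homog hrm (Algebra.subset_adjoin (Or.inl ⟨m, hm0, hmd, hrm⟩)) M
    · exact homog (hU hrU) (Algebra.subset_adjoin (Or.inr hrU)) M
  · intro r M
    have h1 : algebraMap k R r ∈ 𝒜 0 := by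
      rw [Algebra.algebraMap_eq_smul_one]
      exact Submodule.smul_mem _ _ SetLike.GradedOne.one_mem
    exact homog h1 (Subalgebra.algebraMap_mem _ r) M
  · intro a b _ _ iha ihb M
    rw [DirectSum.decompose_add, DirectSum.add_apply]
    push_cast
    exact add_mem (iha M) (ihb M)
  · intro a b _ _ iha ihb M
    rw [DirectSum.decompose_mul, DirectSum.coe_mul_apply]
    exact sum_mem fun ij _ => mul_mem (iha ij.1) (ihb ij.2)

lemma adjoinG_deriv (h0 : ∀ x ∈ 𝒜 0, ∃ c : k, algebraMap k R c = x)
    {d : ℕ} (hd : 0 < d) (U : Submodule k R) (hU : U ≤ 𝒜 d)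
    {D : Derivation k R R} {e : ℕ} (hDe : IsHomogeneousNegDerivation 𝒜 D e)
    {a : R} (ha : a ∈ Algebra.adjoin k (GSet 𝒜 d U)) :
    D a ∈ Algebra.adjoin k (GSet 𝒜 d U) := by
  refine Algebra.adjoin_induction (p := fun a _ => D a ∈ Algebra.adjoin k (GSet 𝒜 d U))
    ?_ ?_ ?_ ?_ ha
  · intro r hr
    rcases hr with ⟨m, hm0, hmd, hrm⟩ | hrU
    · have h2 := hDe.2 m r hrm
      split_ifs at h2 with h
      · exact mem_adjoinG_of_low 𝒜 h0 U (lt_of_le_of_lt (Nat.sub_le m e) hmd) h2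
      · rw [h2]; exact zero_mem _
    · have h2 := hDe.2 d r (hU hrU)
      split_ifs at h2 with h
      · exact mem_adjoinG_of_low 𝒜 h0 U (Nat.sub_lt hd hDe.1) h2
      · rw [h2]; exact zero_mem _
  · intro r; rw [Derivation.map_algebraMap]; exact zero_mem _
  · intro a b _ _ iha ihb; rw [map_add]; exact add_mem iha ihb
  · intro a b haC hbC iha ihb
    rw [Derivation.leibniz, smul_eq_mul, smul_eq_mul]
    exact add_mem (mul_mem haC ihb) (mul_mem hbC iha)

lemma adjoinG_homog_mem {d : ℕ} (hd : 0 < d) (U : Submodule k R) (hU : U ≤ 𝒜 d) {a : R}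
    (haC : a ∈ Algebra.adjoin k (GSet 𝒜 d U)) (had : a ∈ 𝒜 d) :
    ∃ u ∈ U, a - u ∈ Rplus 𝒜 * Rplus 𝒜 := by
  classical
  set Q : Ideal R := Rplus 𝒜 * Rplus 𝒜 with hQdef
  set V : Submodule k R := Submodule.span k ({1} ∪ GSet 𝒜 d U) with hVdef
  set M : Submodule k R := V ⊔ Q.restrictScalars k with hMdef
  have hVM : V ≤ M := le_sup_left
  have hQM : Q.restrictScalars k ≤ M := le_sup_right
  have hGpos : ∀ g ∈ GSet 𝒜 d U, g ∈ Rplus 𝒜 := by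
    intro g hg
    rcases hg with ⟨m, hm0, _, hgm⟩ | hgU
    · exact Ideal.subset_span ⟨m, hm0, hgm⟩
    · exact Ideal.subset_span ⟨d, hd, hU hgU⟩
  have hmulVV : ∀ s ∈ V, ∀ s' ∈ V, s * s' ∈ M := by
    intro s hs
    induction hs using Submodule.span_induction with
    | mem g hg =>
      rcases hg with hg1 | hgG
      · rw [Set.mem_singleton_iff] at hg1
        subst hg1
        intro s' hs'
        rw [one_mul]
        exact hVM hs'
      · intro s' hs'
        induction hs' using Submodule.span_induction with
        | mem g' hg' =>
          rcases hg' with hg1' | hgG'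
          · rw [Set.mem_singleton_iff] at hg1'
            subst hg1'
            rw [mul_one]
            exact hVM (Submodule.subset_span (Or.inr hgG))
          · exact hQM (by
              simpa using Ideal.mul_mem_mul (hGpos g hgG) (hGpos g' hgG'))
        | zero => rw [mul_zero]; exact zero_mem _
        | add x y _ _ ihx ihy => rw [mul_add]; exact add_mem ihx ihy
        | smul c x _ ih => rw [mul_smul_comm]; exact Submodule.smul_mem _ _ ih
    | zero => intro s' _; rw [zero_mul]; exact zero_mem _
    | add x y _ _ ihx ihy => intro s' hs'; rw [add_mul]; exact add_mem (ihx s' hs') (ihy s' hs')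
    | smul c x _ ih => intro s' hs'; rw [smul_mul_assoc]; exact Submodule.smul_mem _ _ (ih s' hs')
  have hCM : a ∈ M := by
    refine Algebra.adjoin_induction (p := fun a _ => a ∈ M) ?_ ?_ ?_ ?_ haC
    · intro g hg; exact hVM (Submodule.subset_span (Or.inr hg))
    · intro r
      rw [Algebra.algebraMap_eq_smul_one]
      exact hVM (Submodule.smul_mem _ _ (Submodule.subset_span (Or.inl rfl)))
    · intro a b _ _ iha ihb; exact add_mem iha ihb
    · intro a b _ _ iha ihb
      obtain ⟨s, hs, q, hq, rfl⟩ := Submodule.mem_sup.1 iha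
      obtain ⟨s', hs', q', hq', rfl⟩ := Submodule.mem_sup.1 ihb
      have hqQ : q ∈ Q := hq
      have hqQ' : q' ∈ Q := hq'
      have hexp : (s + q) * (s' + q') = s * s' + ((s + q) * q' + q * s') := by ring
      rw [hexp]
      refine add_mem (hmulVV s hs s' hs') (add_mem (hQM ?_) (hQM ?_))
      · simpa using Q.mul_mem_left (s + q) hqQ'
      · simpa using Q.mul_mem_right s' hqQ
  obtain ⟨s, hsV, q, hqQ, heq⟩ := Submodule.mem_sup.1 hCM
  have hqQ' : q ∈ Q := hqQ
  refine ⟨(DirectSum.decompose 𝒜 s d : R), ?_, ?_⟩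
  · clear heq
    induction hsV using Submodule.span_induction with
    | mem g hg =>
      rcases hg with hg1 | hgG
      · rw [Set.mem_singleton_iff] at hg1
        subst hg1
        rw [DirectSum.decompose_of_mem_ne 𝒜 SetLike.GradedOne.one_mem hd.ne]
        exact zero_mem _
      · rcases hgG with ⟨m, _, hmd, hgm⟩ | hgU
        · rw [DirectSum.decompose_of_mem_ne 𝒜 hgm hmd.ne]
          exact zero_mem _
        · rw [DirectSum.decompose_of_mem_same 𝒜 (hU hgU)]
          exact hgU
    | zero => rw [DirectSum.decompose_zero]; simpa using zero_mem U
    | add x y _ _ ihx ihy =>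
      rw [DirectSum.decompose_add, DirectSum.add_apply]
      push_cast
      exact add_mem ihx ihy
    | smul c x _ ih =>
      rw [DirectSum.decompose_smul, DirectSum.smul_apply]
      push_cast
      exact Submodule.smul_mem _ _ ih
  · have hRpH : (Rplus 𝒜).IsHomogeneous 𝒜 :=
      Ideal.homogeneous_span 𝒜 _ (fun r hr => ⟨hr.choose, hr.choose_spec.2⟩)
    have hQH : Q.IsHomogeneous 𝒜 := hRpH.mul hRpH
    have h1 : a = (DirectSum.decompose 𝒜 a d : R) :=
      (DirectSum.decompose_of_mem_same 𝒜 had).symm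
    have h2 : (DirectSum.decompose 𝒜 a d : R) =
        (DirectSum.decompose 𝒜 s d : R) + (DirectSum.decompose 𝒜 q d : R) := by
      rw [← heq, DirectSum.decompose_add, DirectSum.add_apply]
      push_cast
      rfl
    rw [h1, h2, add_sub_cancel_left]
    exact hQH d hqQ'

lemma key_main [CharZero k] (h0 : ∀ x ∈ 𝒜 0, ∃ c : k, algebraMap k R c = x)
    (hED : HasEnoughDerivations 𝒜)
    {x : R} {d : ℕ} (hd : 0 < d) (hxd : x ∈ 𝒜 d)
    (U : Submodule k R) (hU : U ≤ 𝒜 d)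
    (hxU : ∀ u ∈ U, x - u ∉ Rplus 𝒜 * Rplus 𝒜)
    (n : ℕ) (c : ℕ → R) (hc : ∀ i, c i ∈ Algebra.adjoin k (GSet 𝒜 d U))
    (hcn : c n ≠ 0) : ∑ i ∈ Finset.range (n + 1), c i * x ^ i ≠ 0 := by
  classical
  intro hsum
  have hxpow : ∀ i : ℕ, x ^ i ∈ 𝒜 (i * d) := fun i => by
    simpa [smul_eq_mul] using SetLike.pow_mem_graded i hxd
  have hdecsum : ∀ (s : Finset ℕ) (f : ℕ → R) (K : ℕ),
      (DirectSum.decompose 𝒜 (∑ i ∈ s, f i) K : R)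
        = ∑ i ∈ s, (DirectSum.decompose 𝒜 (f i) K : R) := by
    intro s f K
    rw [DirectSum.decompose_sum, DFinsupp.finset_sum_apply, AddSubmonoidClass.coe_finset_sum]
  set P : ℕ → Prop := fun N => ∃ b : ℕ → R,
      (∀ i, b i ∈ Algebra.adjoin k (GSet 𝒜 d U))
    ∧ (∀ i, i * d ≤ N → b i ∈ 𝒜 (N - i * d))
    ∧ (∀ i, N < i * d → b i = 0)
    ∧ (∃ j, b j ≠ 0)
    ∧ ∑ i ∈ Finset.range (N + 1), b i * x ^ i = 0 with hPdef
  have hex : ∃ N, P N := by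
    have h1 : ∃ M, (DirectSum.decompose 𝒜 (c n) M : R) ≠ 0 := by
      by_contra h
      push_neg at h
      apply hcn
      rw [← DirectSum.sum_support_decompose 𝒜 (c n)]
      exact Finset.sum_eq_zero fun i _ => h i
    obtain ⟨M, hM⟩ := h1
    set K := M + n * d with hK
    have hndK : n * d ≤ K := by omega
    have hnK : n ≤ K := le_trans (Nat.le_mul_of_pos_right n hd) hndK
    refine ⟨K, fun i => if i ≤ n ∧ i * d ≤ K
      then (DirectSum.decompose 𝒜 (c i) (K - i * d) : R) else 0, ?_, ?_, ?_, ⟨n, ?_⟩, ?_⟩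
    · intro i
      dsimp only
      split_ifs with h
      · exact adjoinG_graded 𝒜 h0 U hU (hc i) _
      · exact zero_mem _
    · intro i hi
      dsimp only
      split_ifs with h
      · exact SetLike.coe_mem _
      · exact zero_mem _
    · intro i hi
      dsimp only
      rw [if_neg (fun hh => absurd hh.2 (by omega))]
    · dsimp only
      rw [if_pos ⟨le_refl n, hndK⟩]
      have : K - n * d = M := by omega
      rw [this]
      exact hM
    · have hsub : Finset.range (n + 1) ⊆ Finset.range (K + 1) :=
        Finset.range_subset_range.2 (by omega)
      dsimp only
      rw [← Finset.sum_subset hsub (by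
        intro i hi hni
        rw [Finset.mem_range] at hi hni
        rw [if_neg (fun hh => absurd hh.1 (by omega)), zero_mul])]
      have hstep : ∀ i ∈ Finset.range (n + 1),
          (if i ≤ n ∧ i * d ≤ K then (DirectSum.decompose 𝒜 (c i) (K - i * d) : R) else 0) * x ^ i
            = (DirectSum.decompose 𝒜 (c i * x ^ i) K : R) := by
        intro i hi
        rw [Finset.mem_range] at hi
        by_cases h : i * d ≤ K
        · rw [if_pos ⟨by omega, h⟩]
          exact (DirectSum.coe_decompose_mul_of_right_mem_of_le 𝒜 (hxpow i) h).symm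
        · rw [if_neg (fun hh => h hh.2), zero_mul]
          exact (DirectSum.coe_decompose_mul_of_right_mem_of_not_le 𝒜 (hxpow i) h).symm
      rw [Finset.sum_congr rfl hstep, ← hdecsum, hsum, DirectSum.decompose_zero]
      simp
  set N := Nat.find hex with hNdef
  obtain ⟨b, hbC, hbH, hbV, hbne, hbS⟩ : P N := Nat.find_spec hex
  have hmin : ∀ m, m < N → ¬ P m := fun m hm => Nat.find_min hex hm
  have hP0 : ∀ (b' : ℕ → R), (∀ i, 0 < i * d → b' i = 0) →
      (∑ i ∈ Finset.range 1, b' i * x ^ i = b' 0) := by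
    intro b' _
    simp
  have hNpos : 0 < N := by
    rcases Nat.eq_zero_or_pos N with h | h
    · exfalso
      obtain ⟨j, hj⟩ := hbne
      have hjd : j * d ≤ N := by
        by_contra hc'
        exact hj (hbV j (by omega))
      have hj0 : j = 0 := by
        rcases Nat.eq_zero_or_pos j with h' | h'
        · exact h'
        · exfalso
          have : 0 < j * d := Nat.mul_pos h' hd
          omega
      subst hj0
      have : ∑ i ∈ Finset.range (N + 1), b i * x ^ i = b 0 := by
        rw [h]
        simp
      rw [hbS] at this
      exact hj this.symm
    · exact h
  -- the star identities
  have hstar : ∀ (D : Derivation k R R) (e : ℕ), IsHomogeneousNegDerivation 𝒜 D e →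
      ∀ i, D (b i) + ((i + 1 : ℕ) : R) * (b (i + 1) * D x) = 0 := by
    intro D e hDe
    set c2 : ℕ → R := fun i => D (b i) + ((i + 1 : ℕ) : R) * (b (i + 1) * D x) with hc2def
    have hDxC : D x ∈ Algebra.adjoin k (GSet 𝒜 d U) := by
      have h2 := hDe.2 d x hxd
      split_ifs at h2 with h
      · exact mem_adjoinG_of_low 𝒜 h0 U (Nat.sub_lt hd hDe.1) h2
      · rw [h2]; exact zero_mem _
    have hvan : ∀ i, N - e < i * d → c2 i = 0 := by
      intro i hi
      have hterm1 : D (b i) = 0 := by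
        by_cases h : i * d ≤ N
        · have h3 := hDe.2 (N - i * d) (b i) (hbH i h)
          rw [if_neg (by omega)] at h3
          exact h3
        · rw [hbV i (by omega), map_zero]
      have hterm2 : b (i + 1) * D x = 0 := by
        have hsucc : (i + 1) * d = i * d + d := by ring
        by_cases h : (i + 1) * d ≤ N
        · have hDx0 : D x = 0 := by
            have h3 := hDe.2 d x hxd
            rw [if_neg (by omega)] at h3
            exact h3
          rw [hDx0, mul_zero]
        · rw [hbV (i + 1) (by omega), zero_mul]
      rw [hc2def]
      simp [hterm1, hterm2]
    by_contra hne
    push_neg at hne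
    obtain ⟨j, hj⟩ := hne
    have hPNe : P (N - e) := by
      refine ⟨c2, ?_, ?_, hvan, ⟨j, hj⟩, ?_⟩
      · intro i
        refine add_mem (adjoinG_deriv 𝒜 h0 hd U hU hDe (hbC i)) ?_
        rw [← nsmul_eq_mul]
        exact nsmul_mem (mul_mem (hbC (i + 1)) hDxC) _
      · intro i hi
        have hiN : i * d ≤ N := by omega
        have h1 : D (b i) ∈ 𝒜 (N - e - i * d) := by
          have h3 := hDe.2 (N - i * d) (b i) (hbH i hiN)
          by_cases he : e ≤ N - i * d
          · rw [if_pos he] at h3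
            have harith : N - i * d - e = N - e - i * d := by omega
            rwa [harith] at h3
          · rw [if_neg he] at h3
            rw [h3]
            exact zero_mem _
        have h2 : b (i + 1) * D x ∈ 𝒜 (N - e - i * d) := by
          have hsucc : (i + 1) * d = i * d + d := by ring
          by_cases hc1 : (i + 1) * d ≤ N
          · have hb1 : b (i + 1) ∈ 𝒜 (N - (i + 1) * d) := hbH (i + 1) hc1
            have h3 := hDe.2 d x hxd
            by_cases hc2 : e ≤ d
            · rw [if_pos hc2] at h3
              have h4 := SetLike.mul_mem_graded hb1 h3
              have harith : N - (i + 1) * d + (d - e) = N - e - i * d := by omega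
              rwa [harith] at h4
            · rw [if_neg hc2] at h3
              rw [h3, mul_zero]
              exact zero_mem _
          · rw [hbV (i + 1) (by omega), zero_mul]
            exact zero_mem _
        refine add_mem h1 ?_
        rw [← nsmul_eq_mul]
        exact nsmul_mem h2 _
      · -- the sum over range (N - e + 1)
        have h2 : ∀ i : ℕ, D (b i * x ^ i)
            = x ^ i * D (b i) + ((i : ℕ) : R) * (b i * (x ^ (i - 1) * D x)) := by
          intro i
          rw [Derivation.leibniz, Derivation.leibniz_pow]
          simp only [smul_eq_mul, nsmul_eq_mul]
          ring
        have h1 : ∑ i ∈ Finset.range (N + 1), D (b i * x ^ i) = 0 := by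
          rw [← map_sum, hbS, map_zero]
        have h4 : ∑ i ∈ Finset.range (N + 1), ((i : ℕ) : R) * (b i * (x ^ (i - 1) * D x))
            = ∑ i ∈ Finset.range (N + 1), ((i + 1 : ℕ) : R) * (b (i + 1) * D x) * x ^ i := by
          rw [Finset.sum_range_succ' (fun i => ((i : ℕ) : R) * (b i * (x ^ (i - 1) * D x))) N]
          rw [Finset.sum_range_succ]
          have hbN1 : b (N + 1) = 0 := by
            have h5 : N + 1 ≤ (N + 1) * d := Nat.le_mul_of_pos_right _ hd
            exact hbV (N + 1) (by omega)
          rw [hbN1]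
          simp only [Nat.cast_zero, zero_mul, mul_zero, add_zero, Nat.cast_ofNat,
            Nat.add_sub_cancel]
          exact Finset.sum_congr rfl fun i _ => by push_cast; ring
        have hDsum : ∑ i ∈ Finset.range (N + 1), c2 i * x ^ i = 0 := by
          calc ∑ i ∈ Finset.range (N + 1), c2 i * x ^ i
              = ∑ i ∈ Finset.range (N + 1),
                  (D (b i) * x ^ i + ((i + 1 : ℕ) : R) * (b (i + 1) * D x) * x ^ i) := by
                exact Finset.sum_congr rfl fun i _ => by rw [hc2def]; ring
            _ = ∑ i ∈ Finset.range (N + 1), D (b i) * x ^ i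
                + ∑ i ∈ Finset.range (N + 1), ((i + 1 : ℕ) : R) * (b (i + 1) * D x) * x ^ i := by
                rw [Finset.sum_add_distrib]
            _ = ∑ i ∈ Finset.range (N + 1), D (b i) * x ^ i
                + ∑ i ∈ Finset.range (N + 1), ((i : ℕ) : R) * (b i * (x ^ (i - 1) * D x)) := by
                rw [h4]
            _ = ∑ i ∈ Finset.range (N + 1),
                  (x ^ i * D (b i) + ((i : ℕ) : R) * (b i * (x ^ (i - 1) * D x))) := by
                rw [← Finset.sum_add_distrib]
                exact Finset.sum_congr rfl fun i _ => by ring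
            _ = ∑ i ∈ Finset.range (N + 1), D (b i * x ^ i) := by
                exact Finset.sum_congr rfl fun i _ => (h2 i).symm
            _ = 0 := h1
        have hsub : Finset.range (N - e + 1) ⊆ Finset.range (N + 1) :=
          Finset.range_subset_range.2 (by omega)
        rw [← Finset.sum_subset hsub (by
          intro i hi hni
          rw [Finset.mem_range] at hi hni
          have hid : i ≤ i * d := Nat.le_mul_of_pos_right _ hd
          rw [hvan i (by omega), zero_mul])] at hDsum
        exact hDsum
    have hlt : N - e < N := Nat.sub_lt hNpos hDe.1
    exact hmin (N - e) hlt hPNe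
  -- largest nonzero coefficient
  obtain ⟨j₀, hj₀⟩ := hbne
  have hj₀d : j₀ * d ≤ N := by
    by_contra h
    exact hj₀ (hbV j₀ (by omega))
  have hj₀N : j₀ ≤ N := le_trans (Nat.le_mul_of_pos_right _ hd) hj₀d
  set S := (Finset.range (N + 1)).filter (fun j => b j ≠ 0) with hSdef
  have hSne : S.Nonempty := ⟨j₀, Finset.mem_filter.2 ⟨Finset.mem_range.2 (by omega), hj₀⟩⟩
  set n₀ := S.max' hSne with hn₀def
  have hbn₀ : b n₀ ≠ 0 := (Finset.mem_filter.1 (S.max'_mem hSne)).2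
  have hgt : ∀ j, n₀ < j → b j = 0 := by
    intro j hj
    by_contra hbj
    have hjd : j * d ≤ N := by
      by_contra h
      exact hbj (hbV j (by omega))
    have hjN : j ≤ N := le_trans (Nat.le_mul_of_pos_right _ hd) hjd
    have hjS : j ∈ S := Finset.mem_filter.2 ⟨Finset.mem_range.2 (by omega), hbj⟩
    exact absurd (S.le_max' j hjS) (by omega)
  have hn₀d : n₀ * d ≤ N := by
    by_contra h
    exact hbn₀ (hbV n₀ (by omega))
  have hn₀pos : 0 < n₀ := by
    rcases Nat.eq_zero_or_pos n₀ with h | h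
    · exfalso
      have hsum0 : ∑ i ∈ Finset.range (N + 1), b i * x ^ i = b 0 := by
        rw [Finset.sum_eq_single 0]
        · rw [pow_zero, mul_one]
        · intro i _ hi0
          rw [hgt i (by omega), zero_mul]
        · intro h'
          exact absurd (Finset.mem_range.2 (by omega)) h'
      rw [hbS] at hsum0
      rw [h] at hbn₀
      exact hbn₀ hsum0.symm
    · exact h
  have hDb : ∀ (D : Derivation k R R) (e : ℕ), IsHomogeneousNegDerivation 𝒜 D e →
      D (b n₀) = 0 := by
    intro D e hDe
    have h1 := hstar D e hDe n₀
    rw [hgt (n₀ + 1) (by omega)] at h1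
    simpa using h1
  have hNeq : N = n₀ * d := by
    by_contra h
    have hpos : 0 < N - n₀ * d := by omega
    obtain ⟨D, e, hDe, hne⟩ := hED (b n₀) (N - n₀ * d) hpos (hbH n₀ hn₀d) hbn₀
    exact hne (hDb D e hDe)
  have hb₀0 : b n₀ ∈ 𝒜 0 := by
    have h1 := hbH n₀ hn₀d
    have h2 : N - n₀ * d = 0 := by omega
    rwa [h2] at h1
  obtain ⟨κ, hκ⟩ := h0 (b n₀) hb₀0
  have hκ0 : κ ≠ 0 := by
    rintro rfl
    rw [map_zero] at hκ
    exact hbn₀ hκ.symm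
  set m := n₀ - 1 with hmdef
  have hmn : m + 1 = n₀ := by omega
  set z := b m + ((n₀ : ℕ) : R) * (b n₀ * x) with hzdef
  have hz3 : z ∈ 𝒜 d := by
    have hmd : m * d ≤ N := le_trans (Nat.mul_le_mul_right d (by omega)) (le_of_eq hNeq.symm)
    have h1 : b m ∈ 𝒜 (N - m * d) := hbH m hmd
    have h2 : N - m * d = d := by
      have h5 : n₀ * d = m * d + d := by rw [← hmn]; ring
      omega
    rw [h2] at h1
    have h3 : b n₀ * x ∈ 𝒜 d := by
      have := SetLike.mul_mem_graded hb₀0 hxd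
      rwa [zero_add] at this
    refine add_mem h1 ?_
    rw [← nsmul_eq_mul]
    exact nsmul_mem h3 _
  have hDz : ∀ (D : Derivation k R R) (e : ℕ), IsHomogeneousNegDerivation 𝒜 D e →
      D z = 0 := by
    intro D e hDe
    have h1 := hstar D e hDe m
    rw [hmn] at h1
    have h2 : D z = D (b m) + ((n₀ : ℕ) : R) * (b n₀ * D x) := by
      rw [hzdef, map_add]
      congr 1
      rw [← nsmul_eq_mul, Derivation.map_smul_of_tower, Derivation.leibniz, smul_eq_mul,
        smul_eq_mul, hDb D e hDe, mul_zero, add_zero, nsmul_eq_mul]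
    rw [h2]
    exact h1
  have hz0 : z = 0 := by
    by_contra h
    obtain ⟨D, e, hDe, hne⟩ := hED z d hd hz3 h
    exact hne (hDz D e hDe)
  have hbm : b m = -(algebraMap k R ((n₀ : k) * κ) * x) := by
    have h1 : b m = -(((n₀ : ℕ) : R) * (b n₀ * x)) := eq_neg_of_add_eq_zero_left hz0
    rw [h1, ← hκ, ← map_natCast (algebraMap k R) n₀, ← mul_assoc, ← map_mul]
  set lam := (n₀ : k) * κ with hlam
  have hlam0 : lam ≠ 0 := mul_ne_zero (Nat.cast_ne_zero.2 (by omega)) hκ0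
  have hxeq : x = (-lam⁻¹) • b m := by
    rw [hbm, smul_neg, neg_smul, neg_neg, Algebra.smul_def, ← mul_assoc, ← map_mul,
      inv_mul_cancel₀ hlam0, map_one, one_mul]
  have hxC : x ∈ Algebra.adjoin k (GSet 𝒜 d U) := by
    rw [hxeq]
    exact Subalgebra.smul_mem _ (hbC m) _
  obtain ⟨u, huU, hdiff⟩ := adjoinG_homog_mem 𝒜 hd U hU hxC hxd
  exact hxU u huU hdiff


end Aux
section Rest

open DirectSum Finset

variable {k R : Type*} [Field k] [CommRing R] [Algebra k R]
variable (𝒜 : ℕ → Submodule k R) [GradedAlgebra 𝒜]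

lemma lin_indep_not_mem (Rp : Ideal R) (hRp : Rp = Rplus 𝒜) (E : Set R)
    (hli : LinearIndependent k fun y : E => Ideal.Quotient.mk (Rp * Rp) (y : R))
    {x : R} (hx : x ∈ E) {u : R} (hu : u ∈ Submodule.span k (E \ {x})) :
    x - u ∉ Rplus 𝒜 * Rplus 𝒜 := by
  classical
  intro hmem
  rw [← hRp] at hmem
  obtain ⟨l, hlsupp, hlsum⟩ := Submodule.mem_span_set.1 hu
  set Q := Rp * Rp with hQ
  set φ := Ideal.Quotient.mkₐ k Q with hφ
  have hφeq : ∀ r : R, Ideal.Quotient.mk Q r = φ r := fun r => rfl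
  set emb : {m : R // m ∈ l.support} ↪ E :=
    ⟨fun m => ⟨m.1, (hlsupp m.2).1⟩, by
      intro a b h
      have h' : (a : R) = b := congrArg (fun y : E => (y : R)) h
      exact Subtype.ext h'⟩
    with hemb
  set T : Finset E := l.support.attach.map emb with hT
  have hxT : (⟨x, hx⟩ : E) ∉ T := by
    rw [hT]
    simp only [Finset.mem_map, Finset.mem_attach, true_and]
    rintro ⟨m, hm⟩
    have h2 : (m : R) ∈ E \ {x} := hlsupp m.2
    apply h2.2
    have h3 := congrArg Subtype.val hm
    exact h3
  set g : E → k := fun y => if (y : R) = x then 1 else -(l y) with hg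
  have hsum0 : ∑ y ∈ insert (⟨x, hx⟩ : E) T, g y • Ideal.Quotient.mk Q (y : R) = 0 := by
    rw [Finset.sum_insert hxT]
    have hgx : g ⟨x, hx⟩ = 1 := by rw [hg]; simp
    have hTsum : ∑ y ∈ T, g y • Ideal.Quotient.mk Q (y : R) = -(φ u) := by
      rw [hT, Finset.sum_map]
      have hterm : ∀ m : {m : R // m ∈ l.support},
          g (emb m) • Ideal.Quotient.mk Q ((emb m : E) : R) = -(l (m : R) • φ (m : R)) := by
        intro m
        have hne : (m : R) ≠ x := fun h => (hlsupp m.2).2 h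
        rw [hg]
        change (if (m : R) = x then (1 : k) else -(l (m : R))) • Ideal.Quotient.mk Q (m : R) = _
        rw [if_neg hne, hφeq, neg_smul]
      rw [Finset.sum_congr rfl (fun m _ => hterm m), Finset.sum_neg_distrib]
      congr 1
      rw [← hlsum]
      rw [Finsupp.sum, map_sum]
      rw [Finset.sum_attach l.support (fun m => l m • φ m)]
      exact Finset.sum_congr rfl fun m _ => (map_smul φ _ _).symm
    rw [hgx, one_smul, hTsum, hφeq, ← sub_eq_add_neg, ← map_sub]
    exact Ideal.Quotient.eq_zero_iff_mem.2 hmem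
  have happ := linearIndependent_iff'.1 hli (insert (⟨x, hx⟩ : E) T) g hsum0 ⟨x, hx⟩
    (Finset.mem_insert_self _ _)
  rw [hg] at happ
  simp at happ

end Rest
section Rest2

open DirectSum Finset

variable {k R : Type*} [Field k] [CharZero k] [CommRing R] [Algebra k R]
variable (𝒜 : ℕ → Submodule k R) [GradedAlgebra 𝒜]

lemma trans_of_max (h0 : ∀ x ∈ 𝒜 0, ∃ c : k, algebraMap k R c = x)
    (hED : HasEnoughDerivations 𝒜)
    (Rp : Ideal R) (hRp : Rp = Rplus 𝒜) (E : Set R)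
    (hli : LinearIndependent k fun y : E => Ideal.Quotient.mk (Rp * Rp) (y : R))
    {x : R} (hx : x ∈ E) {d : ℕ} (hd : 0 < d) (hxd : x ∈ 𝒜 d)
    (t : Set R) (ht : t ⊆ E \ {x}) (htd : ∀ y ∈ t, ∃ m, 0 < m ∧ m ≤ d ∧ y ∈ 𝒜 m) :
    Transcendental (Algebra.adjoin k t) x := by
  classical
  set U : Submodule k R := Submodule.span k (t ∩ (𝒜 d : Set R)) with hUdef
  have hU : U ≤ 𝒜 d := Submodule.span_le.2 Set.inter_subset_right
  have hadj : Algebra.adjoin k t ≤ Algebra.adjoin k (GSet 𝒜 d U) := by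
    apply Algebra.adjoin_le
    intro y hy
    obtain ⟨m, hm0, hmd, hym⟩ := htd y hy
    rcases lt_or_eq_of_le hmd with h | h
    · exact mem_adjoinG_of_low 𝒜 h0 U h hym
    · subst h
      exact Algebra.subset_adjoin (Or.inr (Submodule.subset_span ⟨hy, hym⟩))
  have hxU : ∀ u ∈ U, x - u ∉ Rplus 𝒜 * Rplus 𝒜 := by
    intro u hu
    have hu2 : u ∈ Submodule.span k (E \ {x}) :=
      Submodule.span_mono (subset_trans Set.inter_subset_left ht) hu
    exact lin_indep_not_mem 𝒜 Rp hRp E hli hx hu2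
  intro halg
  obtain ⟨p, hp0, hpx⟩ := halg
  set q := p.natDegree with hq
  have hcq : ((p.coeff q : Algebra.adjoin k t) : R) ≠ 0 := by
    intro h
    exact (Polynomial.leadingCoeff_ne_zero.2 hp0) (ZeroMemClass.coe_eq_zero.1 h)
  refine key_main 𝒜 h0 hED hd hxd U hU hxU q
    (fun i => ((p.coeff i : Algebra.adjoin k t) : R)) (fun i => hadj (p.coeff i).2) hcq ?_
  have haev := Polynomial.aeval_eq_sum_range (R := Algebra.adjoin k t) (S := R) (x := x) (p := p)
  rw [hpx] at haev
  have hstep : ∑ i ∈ Finset.range (q + 1), ((p.coeff i : Algebra.adjoin k t) : R) * x ^ i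
      = ∑ i ∈ Finset.range (p.natDegree + 1), p.coeff i • x ^ i :=
    Finset.sum_congr rfl fun i _ => by rw [Algebra.smul_def]; rfl
  exact hstep.trans haev.symm

end Rest2
section Rest3

open DirectSum Finset

variable {k R : Type*} [Field k] [CharZero k] [CommRing R] [Algebra k R]
variable (𝒜 : ℕ → Submodule k R) [GradedAlgebra 𝒜]

lemma finAI (h0 : ∀ x ∈ 𝒜 0, ∃ c : k, algebraMap k R c = x)
    (hED : HasEnoughDerivations 𝒜)
    (Rp : Ideal R) (hRp : Rp = Rplus 𝒜) (E : Set R)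
    (hli : LinearIndependent k fun y : E => Ideal.Quotient.mk (Rp * Rp) (y : R))
    (hinj : Function.Injective (algebraMap k R))
    (dg : R → ℕ) (hdg : ∀ y ∈ E, 0 < dg y ∧ y ∈ 𝒜 (dg y)) :
    ∀ (nn : ℕ) (F : Finset R), F.card = nn → (F : Set R) ⊆ E →
      AlgebraicIndependent k (fun y : (F : Set R) => (y : R)) := by
  classical
  intro nn
  induction nn with
  | zero =>
    intro F hcard hFE
    rw [Finset.card_eq_zero] at hcard
    subst hcard
    exact ((algebraicIndependent_empty_iff k R).2 hinj).mono (by simp)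
  | succ nn ih =>
    intro F hcard hFE
    have hFne : F.Nonempty := by rw [← Finset.card_pos, hcard]; omega
    obtain ⟨w, hwF, hwmax⟩ := Finset.exists_max_image F dg hFne
    have hwE : w ∈ E := hFE hwF
    set F' := F.erase w with hF'def
    have hcard' : F'.card = nn := by
      rw [hF'def, Finset.card_erase_of_mem hwF, hcard]
      omega
    have hF'F : ∀ y ∈ F', y ∈ F := fun y hy => Finset.mem_of_mem_erase hy
    have hF'E : ↑F' ⊆ E := fun y hy => hFE (hF'F y hy)
    have hAI' := ih F' hcard' hF'E
    have htr : Transcendental (Algebra.adjoin k (↑F' : Set R)) w := by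
      refine trans_of_max 𝒜 h0 hED Rp hRp E hli hwE (hdg w hwE).1 (hdg w hwE).2 _ ?_ ?_
      · intro y hy
        refine ⟨hF'E hy, ?_⟩
        have : y ∈ F.erase w := by exact_mod_cast hy
        exact Finset.ne_of_mem_erase this
      · intro y hy
        have hyE : y ∈ E := hF'E hy
        refine ⟨dg y, (hdg y hyE).1, ?_, (hdg y hyE).2⟩
        exact hwmax y (hF'F y (by exact_mod_cast hy))
    have hAIopt : AlgebraicIndependent k fun o : Option (↑F' : Set R) => o.elim w (↑) := by
      refine (hAI'.option_iff_transcendental w).2 ?_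
      rwa [Subtype.range_coe]
    have hwq : w ∉ (↑F' : Set R) := by
      simp [hF'def]
    have hins : (↑F : Set R) = insert w (↑F' : Set R) := by
      rw [hF'def, Finset.coe_erase, Set.insert_diff_singleton]
      exact (Set.insert_eq_self.2 (by exact_mod_cast hwF)).symm
    have hBig : AlgebraicIndependent k ((↑) : (insert w (↑F' : Set R) : Set R) → R) := by
      convert hAIopt.comp (Set.subtypeInsertEquivOption hwq) (Equiv.injective _) using 1
      ext y
      by_cases h : (y : R) = w <;> simp [h, Set.subtypeInsertEquivOption]
    exact hBig.mono hins.subset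

end Rest3
theorem stmt1
    {k R : Type*} [Field k] [CharZero k] [CommRing R] [Algebra k R]
    (𝒜 : ℕ → Submodule k R) [GradedAlgebra 𝒜]
    (h0 : ∀ x ∈ 𝒜 0, ∃ c : k, algebraMap k R c = x)
    (hED : HasEnoughDerivations 𝒜)
    (Rp : Ideal R) (hRp : Rp = Ideal.span {x : R | ∃ n, 0 < n ∧ x ∈ 𝒜 n})
    (E : Set R)
    -- the elements of `E` are homogeneous of positive degree:
    (hE : ∀ y ∈ E, ∃ n, 0 < n ∧ y ∈ 𝒜 n)
    -- the images of the elements of `E` in `R₊/R₊²` are `k`-linearly independent: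
    (hli : LinearIndependent k fun y : E => Ideal.Quotient.mk (Rp * Rp) (y : R))
    (x : R) (hx : x ∈ E)
    -- `E \ {x}` is algebraically independent:
    (hAI : AlgebraicIndependent k ((↑) : (E \ {x} : Set R) → R)) :
    -- no nontrivial polynomial relation `∑ aᵢ xⁱ = 0` with coefficients in the subalgebra
    -- generated by `E \ {x}` can hold . . .
    (∀ (n : ℕ) (a : ℕ → R), (∀ i, a i ∈ Algebra.adjoin k (E \ {x})) → a n ≠ 0 →
      ∑ i ∈ Finset.range (n + 1), a i * x ^ i ≠ 0) ∧
    -- . . . i.e. `E` is algebraically independent: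
    AlgebraicIndependent k ((↑) : E → R) := by
  classical
  have hRp' : Rp = Rplus 𝒜 := hRp
  have hmkx : Ideal.Quotient.mk (Rp * Rp) x ≠ 0 := hli.ne_zero ⟨x, hx⟩
  have hnt : Nontrivial R := by
    rcases subsingleton_or_nontrivial R with h | h
    · exact absurd (by rw [Subsingleton.elim x (0 : R), map_zero]) hmkx
    · exact h
  have hinj : Function.Injective (algebraMap k R) := RingHom.injective _
  set dg : R → ℕ := fun y => if h : ∃ m, 0 < m ∧ y ∈ 𝒜 m then h.choose else 0 with hdg_def
  have hdg : ∀ y ∈ E, 0 < dg y ∧ y ∈ 𝒜 (dg y) := by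
    intro y hy
    have h := hE y hy
    rw [hdg_def]
    dsimp only
    rw [dif_pos h]
    exact ⟨h.choose_spec.1, h.choose_spec.2⟩
  have conj2 : AlgebraicIndependent k ((↑) : E → R) := by
    apply algebraicIndependent_of_finite
    intro t htE htfin
    have h2 := finAI 𝒜 h0 hED Rp hRp' E hli hinj dg hdg htfin.toFinset.card htfin.toFinset rfl
      (by rwa [Set.Finite.coe_toFinset])
    have h3 : (htfin.toFinset : Set R) = t := Set.Finite.coe_toFinset htfin
    exact (h3 ▸ h2 : AlgebraicIndependent k ((↑) : t → R))
  refine ⟨?_, conj2⟩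
  have hxs : x ∉ (E \ {x} : Set R) := fun h => h.2 rfl
  have hins : insert x (E \ {x} : Set R) = E := by
    rw [Set.insert_diff_singleton]
    exact Set.insert_eq_self.2 hx
  have hAIins : AlgebraicIndependent k ((↑) : (insert x (E \ {x} : Set R) : Set R) → R) :=
    conj2.mono hins.subset
  have hAIopt : AlgebraicIndependent k fun o : Option (E \ {x} : Set R) => o.elim x (↑) := by
    have h2 := hAIins.comp (Set.subtypeInsertEquivOption hxs).symm (Equiv.injective _)
    convert h2 using 1
    funext o
    rcases o with _ | y <;> simp [Set.subtypeInsertEquivOption]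
  have htr : Transcendental (Algebra.adjoin k (E \ {x} : Set R)) x := by
    have h2 := (hAI.option_iff_transcendental x).1 hAIopt
    rwa [Subtype.range_coe] at h2
  intro n a ha han hsum
  apply htr
  set A' := Algebra.adjoin k (E \ {x} : Set R) with hA'
  set p : Polynomial A' := ∑ i ∈ Finset.range (n + 1), Polynomial.monomial i (⟨a i, ha i⟩ : A')
    with hp
  have hcoeff : p.coeff n = ⟨a n, ha n⟩ := by
    rw [hp, Polynomial.finset_sum_coeff]
    rw [Finset.sum_eq_single n]
    · rw [Polynomial.coeff_monomial, if_pos rfl]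
    · intro i _ hin
      rw [Polynomial.coeff_monomial, if_neg hin]
    · intro h
      exact absurd (Finset.mem_range.2 (by omega)) h
  refine ⟨p, ?_, ?_⟩
  · intro h
    apply han
    rw [h] at hcoeff
    have := congrArg Subtype.val hcoeff.symm
    simpa using this
  · rw [hp, map_sum]
    have hterm : ∀ i, (Polynomial.aeval x) (Polynomial.monomial i (⟨a i, ha i⟩ : A'))
        = a i * x ^ i := by
      intro i
      rw [Polynomial.aeval_monomial]
      rfl
    rw [Finset.sum_congr rfl fun i _ => hterm i]
    exact hsum
end

section
/- Let R be a k-algebra over a field k of characteristic p > 0, let ∂^• be a Hasse derivation on R, and let q be a power of p. Then for any x ∈ R and n ∈ ℕ, ∂^n(x^q) equals (∂^{n/q}(x))^q if q divides n, and equals 0 otherwise. -/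
/-- A Hasse derivation on a `k`-algebra `R`: a sequence of `k`-linear endomorphisms
`∂^n` with `∂^0 = id` satisfying the higher Leibniz rule. -/
structure HasseDerivation (k R : Type*) [CommRing k] [CommRing R] [Algebra k R] where
  d : ℕ → R →ₗ[k] R
  d_zero : d 0 = LinearMap.id
  leibniz : ∀ (n : ℕ) (x y : R),
    d n (x * y) = ∑ ij ∈ Finset.HasAntidiagonal.antidiagonal n, d ij.1 x * d ij.2 y

section Aux

variable {k R : Type*} [CommRing k] [CommRing R] [Algebra k R]

theorem HasseDerivation.d_zero_apply (D : HasseDerivation k R) (x : R) : D.d 0 x = x := by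
  rw [D.d_zero]; rfl

theorem HasseDerivation.d_one_eq (D : HasseDerivation k R) (n : ℕ) (hn : 0 < n) :
    D.d n 1 = 0 := by
  induction n using Nat.strong_induction_on with
  | _ n ih =>
  have h := D.leibniz n 1 1
  rw [mul_one, Finset.Nat.sum_antidiagonal_eq_sum_range_succ_mk] at h
  rw [Finset.sum_range_succ] at h
  have hmid : ∀ i ∈ Finset.range n, D.d i 1 * D.d (n - i) 1
      = if i = 0 then D.d n 1 else 0 := by
    intro i hi
    rcases Nat.eq_zero_or_pos i with h0 | h0
    · simp [h0, D.d_zero_apply]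
    · rw [if_neg h0.ne', ih i (Finset.mem_range.mp hi) h0, zero_mul]
  rw [Finset.sum_congr rfl hmid, Finset.sum_ite_eq' (Finset.range n) 0] at h
  rw [if_pos (Finset.mem_range.mpr hn), Nat.sub_self, D.d_zero_apply, mul_one] at h
  rw [left_eq_add] at h
  exact h

/-- The generating ring homomorphism `x ↦ ∑ ∂ⁿ(x) Xⁿ` into power series. -/
noncomputable def HasseDerivation.gen (D : HasseDerivation k R) : R →+* PowerSeries R where
  toFun x := PowerSeries.mk fun n => D.d n x
  map_one' := by
    ext n
    rw [PowerSeries.coeff_mk, PowerSeries.coeff_one]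
    rcases Nat.eq_zero_or_pos n with h | h
    · simp [h, D.d_zero_apply]
    · rw [D.d_one_eq n h, if_neg h.ne']
  map_mul' x y := by
    ext n
    rw [PowerSeries.coeff_mk, PowerSeries.coeff_mul, D.leibniz]
    simp [PowerSeries.coeff_mk]
  map_zero' := by
    ext n
    simp [PowerSeries.coeff_mk]
  map_add' x y := by
    ext n
    simp [PowerSeries.coeff_mk]

end Aux

/-- Coefficient of a `p`-th power of a power series in characteristic `p`. -/
theorem coeff_pow_char_ps {R : Type*} [CommRing R] (p : ℕ) [hp : Fact p.Prime] [CharP R p]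
    (f : PowerSeries R) (n : ℕ) :
    PowerSeries.coeff n (f ^ p) =
      if p ∣ n then (PowerSeries.coeff (n / p) f) ^ p else 0 := by
  haveI : ExpChar R p := .prime hp.out
  set g : Polynomial R := f.trunc (n + 1) with hg
  have hdvd : (PowerSeries.X : PowerSeries R) ^ (n + 1) ∣ f - (g : PowerSeries R) := by
    rw [PowerSeries.X_pow_dvd_iff]
    intro m hm
    rw [map_sub, Polynomial.coeff_coe, hg, PowerSeries.coeff_trunc, if_pos hm, sub_self]
  have hdvd2 : (PowerSeries.X : PowerSeries R) ^ (n + 1) ∣ f ^ p - (g : PowerSeries R) ^ p :=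
    hdvd.trans (sub_dvd_pow_sub_pow _ _ p)
  have hco : PowerSeries.coeff n (f ^ p) = PowerSeries.coeff n ((g : PowerSeries R) ^ p) := by
    have := (PowerSeries.X_pow_dvd_iff.mp hdvd2) n (Nat.lt_succ_self n)
    rw [map_sub, sub_eq_zero] at this
    exact this
  rw [hco, ← Polynomial.coe_pow, Polynomial.coeff_coe,
    ← Polynomial.map_frobenius_expand (p := p) g, Polynomial.coeff_map,
    Polynomial.coeff_expand hp.out.pos, frobenius_def]
  split_ifs with h
  · rw [hg, PowerSeries.coeff_trunc, if_pos (Nat.lt_succ_of_le (Nat.div_le_self n p))]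
  · rw [zero_pow hp.out.ne_zero]

theorem stmt2_char {k R : Type*} [Field k] [CommRing R] [Algebra k R]
    (p : ℕ) [hp : Fact p.Prime] [CharP k p] [CharP R p]
    (D : HasseDerivation k R) (x : R) (n : ℕ) :
    D.d n (x ^ p) = if p ∣ n then (D.d (n / p) x) ^ p else 0 := by
  have h1 : D.d n (x ^ p) = PowerSeries.coeff n (D.gen (x ^ p)) := by
    simp [HasseDerivation.gen, PowerSeries.coeff_mk]
  rw [h1, map_pow, coeff_pow_char_ps]
  simp [HasseDerivation.gen, PowerSeries.coeff_mk]

theorem stmt2 {k R : Type*} [Field k] [CommRing R] [Algebra k R]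
    (p : ℕ) [hp : Fact p.Prime] [CharP k p]
    (D : HasseDerivation k R) (e : ℕ) (q : ℕ) (hq : q = p ^ e)
    (x : R) (n : ℕ) :
    D.d n (x ^ q) = if q ∣ n then (D.d (n / q) x) ^ q else 0 := by
  rcases subsingleton_or_nontrivial R with hR | hR
  · exact Subsingleton.elim _ _
  haveI : CharP R p := charP_of_injective_algebraMap (algebraMap k R).injective p
  subst hq
  induction e generalizing x n with
  | zero => simp [D.d_zero] -- q = 1
  | succ e ih =>
    have hx : x ^ p ^ (e + 1) = (x ^ p) ^ p ^ e := by
      rw [← pow_mul, pow_succ, mul_comm]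
    rw [hx, ih (x ^ p) n]
    by_cases h1 : p ^ e ∣ n
    · rw [if_pos h1, stmt2_char p D x (n / p ^ e)]
      by_cases h2 : p ∣ n / p ^ e
      · have hdvd : p ^ (e + 1) ∣ n := by
          obtain ⟨d, hd⟩ := h1
          obtain ⟨c, hc⟩ := h2
          rw [hd, Nat.mul_div_cancel_left _ (pow_pos hp.out.pos e)] at hc
          exact ⟨c, by rw [hd, hc, pow_succ]; ring⟩
        rw [if_pos h2, if_pos hdvd, ← pow_mul, ← pow_succ', Nat.div_div_eq_div_mul, ← pow_succ]
      · rw [if_neg h2, if_neg, zero_pow (pow_ne_zero _ hp.out.ne_zero)]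
        intro hcon
        obtain ⟨c, hc⟩ := hcon
        refine h2 ⟨c, ?_⟩
        rw [hc, pow_succ, mul_assoc, Nat.mul_div_cancel_left _ (pow_pos hp.out.pos e)]
    · rw [if_neg h1, if_neg]
      exact fun hcon => h1 ((pow_dvd_pow p (Nat.le_succ e)).trans hcon)
end

section
/- Let R be a graded ring with R_0 = k a perfect field of characteristic p > 0. If R has enough Hasse derivations, then R is reduced. -/
namespace HasseDerivation

variable {k R : Type*} [CommRing k] [CommRing R] [Algebra k R]

lemma mk_mul (D : HasseDerivation k R) (a b : R) :
    (PowerSeries.mk fun i => D.d i (a * b)) =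
      (PowerSeries.mk fun i => D.d i a) * PowerSeries.mk fun i => D.d i b := by
  ext i
  simp [PowerSeries.coeff_mk, PowerSeries.coeff_mul, D.leibniz]

lemma mk_pow (D : HasseDerivation k R) (x : R) (m : ℕ) :
    (PowerSeries.mk fun i => D.d i (x ^ (m + 1))) =
      (PowerSeries.mk fun i => D.d i x) ^ (m + 1) := by
  induction m with
  | zero => simp
  | succ m ih =>
      rw [pow_succ _ (m + 1), D.mk_mul, ih, ← pow_succ]

lemma isNilpotent_d [Nontrivial R] (D : HasseDerivation k R) {x : R} (N : ℕ)
    (hN : ∀ i, N < i → D.d i x = 0) (hx : IsNilpotent x) (j : ℕ) :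
    IsNilpotent (D.d j x) := by
  classical
  obtain ⟨m, hm⟩ := hx
  rcases m with _ | m
  · simp at hm
  set f : Polynomial R := ∑ i ∈ Finset.range (N + 1), Polynomial.C (D.d i x) * Polynomial.X ^ i
    with hf
  have hfc : ∀ j, f.coeff j = D.d j x := by
    intro j
    rw [hf, Polynomial.finset_sum_coeff]
    simp only [Polynomial.coeff_C_mul, Polynomial.coeff_X_pow, mul_ite, mul_one, mul_zero]
    rw [Finset.sum_ite_eq (Finset.range (N + 1)) j (fun i => D.d i x)]
    split_ifs with hj
    · rfl
    · exact (hN j (by simpa using hj)).symm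
  have hcoe : (f : PowerSeries R) = PowerSeries.mk fun i => D.d i x := by
    ext i
    rw [Polynomial.coeff_coe, hfc, PowerSeries.coeff_mk]
  have hfnil : f ^ (m + 1) = 0 := by
    apply Polynomial.coe_injective
    show ((f ^ (m + 1) : Polynomial R) : PowerSeries R) = ((0 : Polynomial R) : PowerSeries R)
    rw [Polynomial.coe_pow, hcoe, ← D.mk_pow, hm, Polynomial.coe_zero]
    ext i
    simp
  have := Polynomial.isNilpotent_iff.mp ⟨m + 1, hfnil⟩ j
  rwa [hfc] at this

end HasseDerivation

/-- A Hasse derivation is homogeneous of negative degree `-e` (with `e > 0`) if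
`∂^n` shifts degrees by `-n*e`. -/
def HasseDerivation.IsHomogeneousNeg {k R : Type*} [CommRing k] [CommRing R] [Algebra k R]
    (𝒜 : ℕ → Submodule k R) (D : HasseDerivation k R) (e : ℕ) : Prop :=
  0 < e ∧ ∀ (n m : ℕ) (y : R), y ∈ 𝒜 m →
    (if n * e ≤ m then D.d n y ∈ 𝒜 (m - n * e) else D.d n y = 0)

/-- `R` has enough Hasse derivations: every homogeneous element of positive degree not
lying in the `k`-span of the `p`-th powers is not killed by `∂¹` for some homogeneous
Hasse derivation of negative degree. -/
def HasEnoughHasseDerivations {k R : Type*} [CommRing k] [CommRing R] [Algebra k R]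
    (𝒜 : ℕ → Submodule k R) (p : ℕ) : Prop :=
  ∀ (x : R) (n : ℕ), 0 < n → x ∈ 𝒜 n →
    x ∉ Submodule.span k {y : R | ∃ r : R, y = r ^ p} →
    ∃ (D : HasseDerivation k R) (e : ℕ), D.IsHomogeneousNeg 𝒜 e ∧ D.d 1 x ≠ 0

set_option maxHeartbeats 1000000 in
theorem stmt5
    {k R : Type*} [Field k] [PerfectField k] [CommRing R] [Algebra k R]
    (p : ℕ) [hp : Fact p.Prime] [CharP k p]
    (𝒜 : ℕ → Submodule k R) [GradedAlgebra 𝒜]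
    (h0 : ∀ x ∈ 𝒜 0, ∃ c : k, algebraMap k R c = x)
    (hEH : HasEnoughHasseDerivations 𝒜 p) :
    IsReduced R := by
  classical
  rcases subsingleton_or_nontrivial R with hR | hR
  · exact ⟨fun x _ => Subsingleton.elim x 0⟩
  haveI : CharP R p := charP_of_injective_algebraMap (algebraMap k R).injective p
  haveI : ExpChar R p := .prime hp.out
  haveI : ExpChar k p := .prime hp.out
  -- Key claim: every homogeneous nilpotent element is zero.
  have key : ∀ n : ℕ, ∀ x ∈ 𝒜 n, IsNilpotent x → x = 0 := by
    intro n
    induction n using Nat.strong_induction_on with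
    | _ n IH =>
    intro x hxn hxnil
    by_contra hx0
    rcases Nat.eq_zero_or_pos n with rfl | hn
    · -- degree zero: x is a scalar, and a nilpotent scalar in a field is zero
      obtain ⟨c, hc⟩ := h0 x hxn
      obtain ⟨m, hm⟩ := hxnil
      have hcm : algebraMap k R (c ^ m) = 0 := by rw [map_pow, hc, hm]
      have hc0 : c ^ m = 0 := by
        apply (algebraMap k R).injective
        rw [hcm, map_zero]
      have : c = 0 := IsNilpotent.eq_zero ⟨m, hc0⟩
      exact hx0 (by rw [← hc, this, map_zero])
    by_cases hspan : x ∈ Submodule.span k {y : R | ∃ r : R, y = r ^ p}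
    · -- x is a p-th power
      have hpow : ∃ y : R, x = y ^ p := by
        let T : Submodule k R :=
          { carrier := {z : R | ∃ y : R, z = y ^ p}
            add_mem' := by
              rintro a b ⟨ya, rfl⟩ ⟨yb, rfl⟩
              exact ⟨ya + yb, by rw [add_pow_char]⟩
            zero_mem' := ⟨0, (zero_pow hp.out.ne_zero).symm⟩
            smul_mem' := by
              rintro c z ⟨y, rfl⟩
              refine ⟨(frobeniusEquiv k p).symm c • y, ?_⟩
              have hb : ((frobeniusEquiv k p).symm c) ^ p = c := by
                have := (frobeniusEquiv k p).apply_symm_apply c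
                rwa [frobeniusEquiv_apply, frobenius_def] at this
              rw [smul_pow, hb]
          }
        have hsub : {y : R | ∃ r : R, y = r ^ p} ⊆ (T : Set R) := fun z hz => hz
        have hle : Submodule.span k {y : R | ∃ r : R, y = r ^ p} ≤ T := Submodule.span_le.mpr hsub
        exact hle hspan
      obtain ⟨y, hy⟩ := hpow
      have hx' : x = ∑ j ∈ (DirectSum.decompose 𝒜 y).support,
          ((DirectSum.decompose 𝒜 y j : R)) ^ p := by
        conv_lhs => rw [hy, ← DirectSum.sum_support_decompose 𝒜 y]
        rw [← frobenius_def, map_sum]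
        simp [frobenius_def]
      have hmem : ∀ j : ℕ, ((DirectSum.decompose 𝒜 y j : R)) ^ p ∈ 𝒜 (p * j) := by
        intro j
        have := SetLike.pow_mem_graded p (SetLike.coe_mem (DirectSum.decompose 𝒜 y j))
        simpa [smul_eq_mul] using this
      have hproj : x = ∑ j ∈ (DirectSum.decompose 𝒜 y).support,
          (DirectSum.decompose 𝒜 ((DirectSum.decompose 𝒜 y j : R) ^ p) n : R) := by
        conv_lhs => rw [← DirectSum.decompose_of_mem_same 𝒜 hxn, hx']
        rw [DirectSum.decompose_sum, DFinsupp.finset_sum_apply, AddSubmonoidClass.coe_finset_sum]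
      by_cases hdvd : p ∣ n
      · obtain ⟨d, hd⟩ := hdvd
        have hxd : x = (DirectSum.decompose 𝒜 y d : R) ^ p := by
          rw [hproj, Finset.sum_eq_single d
            (fun j _ hj => DirectSum.decompose_of_mem_ne 𝒜 (hmem j)
              (fun hc => hj (Nat.eq_of_mul_eq_mul_left hp.out.pos (hc.trans hd))))
            (fun hd' => by
              rw [DFinsupp.notMem_support_iff.mp hd']
              simp [zero_pow hp.out.ne_zero])]
          exact DirectSum.decompose_of_mem_same 𝒜 (hd ▸ hmem d)
        have hd0 : 0 < d := by
          rcases Nat.eq_zero_or_pos d with rfl | h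
          · rw [Nat.mul_zero] at hd; omega
          · exact h
        have hdn : d < n :=
          calc d < 2 * d := by omega
            _ ≤ p * d := Nat.mul_le_mul_right d hp.out.two_le
            _ = n := hd.symm
        have hynil : IsNilpotent ((DirectSum.decompose 𝒜 y d : R)) := by
          obtain ⟨m, hm⟩ := hxnil
          exact ⟨p * m, by rw [pow_mul, ← hxd, hm]⟩
        have := IH d hdn _ (SetLike.coe_mem _) hynil
        rw [this, zero_pow hp.out.ne_zero] at hxd
        exact hx0 hxd
      · -- no term has degree n, so x = 0
        apply hx0
        rw [hproj, Finset.sum_eq_zero]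
        intro j _
        exact DirectSum.decompose_of_mem_ne 𝒜 (hmem j) (fun h => hdvd ⟨j, h.symm⟩)
    · -- use a Hasse derivation
      obtain ⟨D, e, ⟨he, hhom⟩, hD1⟩ := hEH x n hn hxn hspan
      have hen : e ≤ n := by
        by_contra hh
        have := hhom 1 n x hxn
        rw [one_mul, if_neg (by omega)] at this
        exact hD1 this
      have hyz : D.d 1 x ∈ 𝒜 (n - e) := by
        have := hhom 1 n x hxn
        rwa [one_mul, if_pos hen] at this
      have hnil : IsNilpotent (D.d 1 x) := by
        refine D.isNilpotent_d n (fun i hi => ?_) hxnil 1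
        have hlt : n < i * e := by
          calc n < i := hi
            _ = i * 1 := (Nat.mul_one i).symm
            _ ≤ i * e := Nat.mul_le_mul_left i he
        have := hhom i n x hxn
        rwa [if_neg (by omega)] at this
      exact hD1 (IH (n - e) (by omega) _ hyz hnil)
  -- conclude reducedness using homogeneity of the nilradical
  constructor
  intro x hx
  have hbot : (⊥ : Ideal R).IsHomogeneous 𝒜 := Ideal.IsHomogeneous.bot 𝒜
  have hrad := hbot.radical
  have hxmem : x ∈ (⊥ : Ideal R).radical := mem_nilradical.mpr hx
  have hcomp : ∀ i, (DirectSum.decompose 𝒜 x i : R) = 0 := by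
    intro i
    have hmem := hrad i hxmem
    exact key i _ (SetLike.coe_mem _) (mem_nilradical.mp hmem)
  rw [← DirectSum.sum_support_decompose 𝒜 x]
  exact Finset.sum_eq_zero fun i _ => hcomp i
end

section
/- Let A ⊆ B be a flat integral extension of commutative rings. For any ideal I of B with I ≠ B, the codimension (height) of I in B equals the codimension of A ∩ I in A. -/
open TensorProduct in
lemma key_smul_top {R T : Type*} [CommRing R] [CommRing T] [Algebra R T] [Module.Flat R T]
    (J : Ideal R) (a : R) (ha : algebraMap R T a ∈ J.map (algebraMap R T)) :
    (J.colon (Ideal.span {a})) • (⊤ : Submodule R T) = ⊤ := by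
  set I := J.colon (Ideal.span {a}) with hIdef
  set f : R →ₗ[R] R ⧸ J := J.mkQ ∘ₗ LinearMap.toSpanSingleton R R a with hf
  have hker : LinearMap.ker f = I := by
    ext r
    simp [hf, LinearMap.toSpanSingleton_apply, Submodule.Quotient.mk_eq_zero, smul_eq_mul,
      hIdef, Ideal.mem_colon_span_singleton, ← map_mul, Ideal.Quotient.eq_zero_iff_mem]
  set μ : (R ⧸ I) →ₗ[R] R ⧸ J := Submodule.liftQ I f hker.ge with hμ
  have hμinj : Function.Injective μ := by
    rw [← LinearMap.ker_eq_bot, hμ, Submodule.ker_liftQ_eq_bot _ _ _ hker.le]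
  have hg : Function.Injective (μ.rTensor T) :=
    Module.Flat.rTensor_preserves_injective_linearMap μ hμinj
  rw [Submodule.eq_top_iff']
  intro t
  rw [← Submodule.Quotient.mk_eq_zero (I • ⊤)]
  have h1 : μ.rTensor T ((Ideal.Quotient.mk I 1) ⊗ₜ[R] t) = (Ideal.Quotient.mk J a) ⊗ₜ[R] t := by
    rw [LinearMap.rTensor_tmul]
    congr 1
    show μ (Submodule.Quotient.mk (1 : R)) = _
    rw [hμ, Submodule.liftQ_apply, hf]
    simp [LinearMap.toSpanSingleton_apply]
  have h2 : (TensorProduct.quotTensorEquivQuotSMul T J) ((Ideal.Quotient.mk J a) ⊗ₜ[R] t) = Submodule.Quotient.mk (a • t) :=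
    TensorProduct.quotTensorEquivQuotSMul_mk_tmul (M := T) J a t
  have h3 : Submodule.Quotient.mk (p := J • (⊤ : Submodule R T)) (a • t) = 0 := by
    rw [Submodule.Quotient.mk_eq_zero]
    rw [Ideal.smul_top_eq_map, Submodule.restrictScalars_mem, Algebra.smul_def]
    exact Ideal.mul_mem_right t _ ha
  have h4 : (Ideal.Quotient.mk J a) ⊗ₜ[R] t = 0 := by
    apply (TensorProduct.quotTensorEquivQuotSMul T J).injective
    rw [h2, h3, map_zero]
  have h5 : (Ideal.Quotient.mk I 1) ⊗ₜ[R] t = 0 := by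
    apply hg
    rw [h1, h4, map_zero]
  have := TensorProduct.quotTensorEquivQuotSMul_mk_tmul (M := T) I 1 t
  rw [h5, map_zero] at this
  rw [← one_smul R t]
  exact this.symm

lemma going_down {A B : Type*} [CommRing A] [CommRing B] [Algebra A B] [Module.Flat A B]
    (q : Ideal B) [q.IsPrime] (p' : Ideal A) [hp' : p'.IsPrime]
    (h : p' ≤ q.comap (algebraMap A B)) :
    ∃ q' : Ideal B, q' ≤ q ∧ q'.IsPrime ∧ q'.comap (algebraMap A B) = p' := by
  let Bq := Localization.AtPrime q
  haveI : Module.Flat A Bq := Module.Flat.trans A B Bq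
  have hcontr : (p'.map (algebraMap A Bq)).comap (algebraMap A Bq) ≤ p' := by
    intro a haI
    by_contra hap
    have hcolon : p'.colon (Ideal.span {a}) = p' := by
      ext r
      rw [Ideal.mem_colon_span_singleton]
      exact ⟨fun hr => (hp'.mem_or_mem hr).resolve_right hap,
        fun hr => Ideal.mul_mem_right a _ hr⟩
    have hkey := key_smul_top (R := A) (T := Bq) p' a haI
    rw [hcolon, Ideal.smul_top_eq_map] at hkey
    have htop : p'.map (algebraMap A Bq) = ⊤ :=
      (Ideal.eq_top_iff_one _).mpr
        ((Submodule.restrictScalars_mem A _ 1).mp (by rw [hkey]; trivial))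
    have hle : p'.map (algebraMap A Bq) ≤ IsLocalRing.maximalIdeal Bq := by
      rw [IsScalarTower.algebraMap_eq A B Bq, ← Ideal.map_map,
        ← Localization.AtPrime.map_eq_maximalIdeal]
      exact Ideal.map_mono (Ideal.map_le_iff_le_comap.mpr h)
    rw [htop] at hle
    exact (IsLocalRing.maximalIdeal.isMaximal Bq).ne_top (top_le_iff.mp hle)
  obtain ⟨Q, hQge, hQprime, hQle⟩ :=
    Ideal.exists_ideal_comap_le_prime (R := A) (S := Bq) p' (p'.map (algebraMap A Bq)) hcontr
  haveI := hQprime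
  have hQcomap : Q.comap (algebraMap A Bq) = p' :=
    le_antisymm hQle (Ideal.map_le_iff_le_comap.mp hQge)
  refine ⟨Q.comap (algebraMap B Bq), ?_, Ideal.comap_isPrime _ _, ?_⟩
  · intro x hx
    by_contra hxq
    have hu : IsUnit (algebraMap B Bq x) :=
      IsLocalization.map_units Bq (⟨x, hxq⟩ : q.primeCompl)
    exact hQprime.ne_top (Q.eq_top_of_isUnit_mem hx hu)
  · rw [Ideal.comap_comap, ← IsScalarTower.algebraMap_eq A B Bq, hQcomap]

lemma lift_chain {A B : Type*} [CommRing A] [CommRing B] [Algebra A B] [Module.Flat A B] :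
    ∀ (n : ℕ) (p : LTSeries (PrimeSpectrum A)), p.length = n →
      ∀ (Q : PrimeSpectrum B), p.last = PrimeSpectrum.comap (algebraMap A B) Q →
      ∃ P : LTSeries (PrimeSpectrum B), P.length = n ∧ P.last = Q := by
  intro n
  induction n with
  | zero => exact fun p hn Q hQ => ⟨RelSeries.singleton _ Q, rfl, rfl⟩
  | succ n ih =>
    intro p hn Q hQ
    have hlt : p.eraseLast.last < p.last :=
      p.eraseLast_last_rel_last (by omega)
    haveI : Q.asIdeal.IsPrime := Q.2
    haveI : p.eraseLast.last.asIdeal.IsPrime := p.eraseLast.last.2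
    have hle : p.eraseLast.last.asIdeal ≤ Q.asIdeal.comap (algebraMap A B) := by
      rw [← PrimeSpectrum.comap_asIdeal, ← hQ]
      exact hlt.le
    obtain ⟨q', hq'le, hq'prime, hq'comap⟩ :=
      going_down Q.asIdeal p.eraseLast.last.asIdeal hle
    set Q' : PrimeSpectrum B := ⟨q', hq'prime⟩ with hQ'
    have hcomap' : p.eraseLast.last = PrimeSpectrum.comap (algebraMap A B) Q' := by
      apply PrimeSpectrum.ext
      rw [PrimeSpectrum.comap_asIdeal]
      exact hq'comap.symm
    obtain ⟨P', hP'len, hP'last⟩ := ih p.eraseLast (by simp [hn]) Q' hcomap'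
    have hQ'ltQ : Q' < Q := by
      rw [← PrimeSpectrum.asIdeal_lt_asIdeal]
      refine lt_of_le_of_ne hq'le ?_
      intro he
      apply ne_of_lt hlt
      apply PrimeSpectrum.ext
      rw [← hq'comap, show q' = Q.asIdeal from he, ← PrimeSpectrum.comap_asIdeal, ← hQ]
    refine ⟨P'.snoc Q (by rw [hP'last]; exact hQ'ltQ), by simp [hP'len], RelSeries.last_snoc _ _ _⟩

lemma height_comap_le {A B : Type*} [CommRing A] [CommRing B] [Algebra A B] [Module.Flat A B]
    (Q : PrimeSpectrum B) :
    Order.height (PrimeSpectrum.comap (algebraMap A B) Q) ≤ Order.height Q := by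
  rw [Order.height_eq_iSup_last_eq]
  apply iSup₂_le
  intro p hp
  obtain ⟨P, hlen, hlast⟩ := lift_chain p.length p rfl Q hp
  calc (p.length : ℕ∞) = P.length := by rw [hlen]
    _ ≤ Order.height P.last := Order.length_le_height_last
    _ = Order.height Q := by rw [hlast]

lemma height_le_height_comap {A B : Type*} [CommRing A] [CommRing B] [Algebra A B]
    [Algebra.IsIntegral A B] (Q : PrimeSpectrum B) :
    Order.height Q ≤ Order.height (PrimeSpectrum.comap (algebraMap A B) Q) := by
  apply Order.height_le_height_apply_of_strictMono
  intro x y hxy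
  rw [← PrimeSpectrum.asIdeal_lt_asIdeal] at hxy ⊢
  rw [PrimeSpectrum.comap_asIdeal, PrimeSpectrum.comap_asIdeal]
  obtain ⟨b, hby, hbx⟩ := SetLike.exists_of_lt hxy
  haveI : x.asIdeal.IsPrime := x.2
  exact Ideal.comap_lt_comap_of_integral_mem_sdiff hxy.le ⟨hby, hbx⟩
    (Algebra.IsIntegral.isIntegral b)

/-- The codimension (height) of an ideal: the infimum of the heights of the primes
containing it (`⊤` if there is no prime of finite height containing it). -/
noncomputable def Ideal.codim {R : Type*} [CommRing R] (I : Ideal R) : ℕ∞ :=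
  ⨅ p ∈ {p : PrimeSpectrum R | I ≤ p.asIdeal}, Order.height p

theorem stmt7 {A B : Type*} [CommRing A] [CommRing B] [Algebra A B]
    -- `A ⊆ B`:
    (hinj : Function.Injective (algebraMap A B))
    -- flat integral extension:
    [Module.Flat A B] [Algebra.IsIntegral A B]
    (I : Ideal B) (hI : I ≠ ⊤) :
    I.codim = (I.comap (algebraMap A B)).codim := by
  unfold Ideal.codim
  apply le_antisymm
  · refine le_iInf₂ fun p hp => ?_
    haveI : p.asIdeal.IsPrime := p.2
    obtain ⟨Q, hQge, hQprime, hQcomap⟩ :=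
      Ideal.exists_ideal_over_prime_of_isIntegral p.asIdeal I hp
    haveI := hQprime
    refine iInf₂_le_of_le ⟨Q, hQprime⟩ hQge ?_
    have h1 := height_le_height_comap (A := A) (B := B) ⟨Q, hQprime⟩
    have h2 : PrimeSpectrum.comap (algebraMap A B) ⟨Q, hQprime⟩ = p := by
      apply PrimeSpectrum.ext
      rw [PrimeSpectrum.comap_asIdeal]
      exact hQcomap
    rwa [h2] at h1
  · refine le_iInf₂ fun Q hQ => ?_
    refine iInf₂_le_of_le (PrimeSpectrum.comap (algebraMap A B) Q) ?_ (height_comap_le Q)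
    show I.comap (algebraMap A B) ≤ _
    rw [PrimeSpectrum.comap_asIdeal]
    exact Ideal.comap_mono hQ
end

section
/- Let A be a finitely generated algebra over a field k and let U be a (possibly infinite) set of variables. Every prime ideal of the polynomial ring A[U] of finite codimension is finitely generated; moreover it is extended from A[V] for some finite subset V ⊆ U. -/
open MvPolynomial

theorem isPrime_map_C' {R : Type*} [CommRing R] (σ : Type*) (Q : Ideal R) [Q.IsPrime] :
    (Q.map (C : R →+* MvPolynomial σ R)).IsPrime := by
  have h : Q.map (C : R →+* MvPolynomial σ R) =
      RingHom.ker (MvPolynomial.map (Ideal.Quotient.mk Q) :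
        MvPolynomial σ R →+* MvPolynomial σ (R ⧸ Q)) := by
    rw [MvPolynomial.ker_map, Ideal.mk_ker]
  rw [h]
  exact RingHom.ker_isPrime _

theorem isPrime_map_rename' {R σ τ : Type*} [CommRing R] {g : σ → τ}
    (hg : Function.Injective g) (Q : Ideal (MvPolynomial σ R)) [Q.IsPrime] :
    (Q.map (rename g : MvPolynomial σ R →ₐ[R] MvPolynomial τ R)).IsPrime := by
  classical
  set κ := {t // t ∉ Set.range g} with hκ
  let e : κ ⊕ σ ≃ τ :=
    (Equiv.sumComm κ σ).trans
      ((Equiv.sumCongr (Equiv.ofInjective g hg) (Equiv.refl κ)).trans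
        (Equiv.sumCompl (· ∈ Set.range g)))
  have he : ∀ i : σ, e (Sum.inr i) = g i := fun i => rfl
  let E : MvPolynomial κ (MvPolynomial σ R) ≃+* MvPolynomial τ R :=
    ((sumAlgEquiv R κ σ).symm.toRingEquiv).trans (renameEquiv R e).toRingEquiv
  have hfun : ∀ p : MvPolynomial σ R, E (C p) = rename g p := by
    intro p
    have h1 : (sumAlgEquiv R κ σ).symm (C p) = rename Sum.inr p := by
      rw [AlgEquiv.symm_apply_eq]
      have := congrArg (fun f => f p) (sumAlgEquiv_comp_rename_inr (R := R) (S₁ := κ) (S₂ := σ))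
      simpa using this.symm
    show (renameEquiv R e) ((sumAlgEquiv R κ σ).symm (C p)) = rename g p
    rw [h1]
    simp only [renameEquiv_apply, rename_rename]
    congr 1
  have h0 : Q.map (rename g : MvPolynomial σ R →ₐ[R] MvPolynomial τ R)
      = Q.map (E.toRingHom.comp (C : MvPolynomial σ R →+* MvPolynomial κ (MvPolynomial σ R))) := by
    show Ideal.span _ = Ideal.span _
    congr 1
    apply Set.image_congr'
    intro x
    exact (hfun x).symm
  rw [h0, ← Ideal.map_map]
  have hC : (Q.map (C : MvPolynomial σ R →+* MvPolynomial κ (MvPolynomial σ R))).IsPrime :=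
    isPrime_map_C' κ Q
  have : (Q.map (C : MvPolynomial σ R →+* MvPolynomial κ (MvPolynomial σ R))).map E.toRingHom
      = (Q.map (C : MvPolynomial σ R →+* MvPolynomial κ (MvPolynomial σ R))).map E := rfl
  rw [this]
  exact Ideal.map_isPrime_of_equiv E

section aux
variable {A : Type*} [CommRing A] {U : Type*} (P : Ideal (MvPolynomial U A))

/-- rename from a finite subset -/
noncomputable abbrev rnm (V : Finset U) : MvPolynomial {u // u ∈ V} A →ₐ[A] MvPolynomial U A :=
  rename ((↑) : {u // u ∈ V} → U)

noncomputable def extIdeal (V : Finset U) : Ideal (MvPolynomial U A) :=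
  (P.comap (rnm V)).map (rnm V)

lemma extIdeal_le (V : Finset U) : extIdeal P V ≤ P := Ideal.map_comap_le

lemma extIdeal_prime [P.IsPrime] (V : Finset U) : (extIdeal P V).IsPrime :=
  isPrime_map_rename' Subtype.val_injective _

lemma extIdeal_mono {V W : Finset U} (h : V ⊆ W) : extIdeal P V ≤ extIdeal P W := by
  rw [extIdeal, Ideal.map_le_iff_le_comap]
  intro x hx
  have key : (rnm W) (rename (fun u : {u // u ∈ V} => (⟨u.1, h u.2⟩ : {u // u ∈ W})) x)
      = (rnm V) x := by
    simp [rename_rename]; rfl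
  show (rnm V) x ∈ extIdeal P W
  rw [← key]
  exact Ideal.mem_map_of_mem _ (by simpa [Ideal.mem_comap, key] using hx)

lemma extIdeal_step {V : Finset U} (h : extIdeal P V ≠ P) :
    ∃ W : Finset U, V ⊆ W ∧ extIdeal P V < extIdeal P W := by
  classical
  obtain ⟨f, hfP, hfE⟩ := SetLike.exists_of_lt ((extIdeal_le P V).lt_of_ne h)
  obtain ⟨s, q, rfl⟩ := exists_finset_rename f
  refine ⟨V ∪ s, Finset.subset_union_left, ?_⟩
  have hfW : rename ((↑) : {x // x ∈ s} → U) q ∈ extIdeal P (V ∪ s) := by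
    have key : (rnm (V ∪ s)) (rename
        (fun u : {x // x ∈ s} => (⟨u.1, Finset.mem_union_right _ u.2⟩ : {x // x ∈ V ∪ s})) q)
        = rename ((↑) : {x // x ∈ s} → U) q := by
      simp [rename_rename]; rfl
    rw [← key]
    exact Ideal.mem_map_of_mem _ (by simpa [Ideal.mem_comap, key] using hfP)
  exact (extIdeal_mono P Finset.subset_union_left).lt_of_ne
    (fun heq => hfE (heq ▸ hfW))

end aux

theorem stmt8 {k A : Type*} [Field k] [CommRing A] [Algebra k A]
    [Algebra.FiniteType k A] (U : Type*)
    (P : Ideal (MvPolynomial U A)) [P.IsPrime] (hP : P.codim ≠ ⊤) :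
    P.FG ∧ ∃ (V : Finset U) (I : Ideal (MvPolynomial {u // u ∈ V} A)),
      P = I.map (MvPolynomial.rename ((↑) : {u // u ∈ V} → U) :
        MvPolynomial {u // u ∈ V} A →ₐ[A] MvPolynomial U A) := by
  classical
  haveI hNA : IsNoetherianRing A := Algebra.FiniteType.isNoetherianRing k A
  have key : ∃ V : Finset U, extIdeal P V = P := by
    by_contra h
    push_neg at h
    have step : ∀ V : Finset U, ∃ W, V ⊆ W ∧ extIdeal P V < extIdeal P W :=
      fun V => extIdeal_step P (h V)
    choose F _ hF2 using step
    let g : ℕ → Finset U := fun n => F^[n] ∅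
    haveI : ∀ n, (extIdeal P (g n)).IsPrime := fun n => extIdeal_prime P (g n)
    let q : ℕ → PrimeSpectrum (MvPolynomial U A) :=
      fun n => ⟨extIdeal P (g n), extIdeal_prime P (g n)⟩
    have hmono : StrictMono q := by
      apply strictMono_nat_of_lt_succ
      intro n
      rw [← PrimeSpectrum.asIdeal_lt_asIdeal]
      show extIdeal P (g n) < extIdeal P (g (n + 1))
      have : g (n + 1) = F (g n) := Function.iterate_succ_apply' F n ∅
      rw [this]
      exact hF2 (g n)
    let pP : PrimeSpectrum (MvPolynomial U A) := ⟨P, inferInstance⟩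
    have hlt : ∀ n, q n < pP := by
      intro n
      rw [← PrimeSpectrum.asIdeal_lt_asIdeal]
      exact (extIdeal_le P (g n)).lt_of_ne (h (g n))
    have htop : Order.height pP = ⊤ := by
      rw [Order.height_eq_top_iff]
      intro n
      cases n with
      | zero => exact ⟨RelSeries.singleton _ pP, rfl, rfl⟩
      | succ m =>
        refine ⟨(LTSeries.mk m (fun i => q i.1)
          (hmono.comp (fun _ _ hij => hij))).snoc pP (hlt m), ?_, ?_⟩
        · exact RelSeries.last_snoc _ _ _
        · rfl
    apply hP
    rw [Ideal.codim]
    rw [iInf_eq_top]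
    intro p
    rw [iInf_eq_top]
    intro hp
    have : pP ≤ p := hp
    exact le_antisymm le_top (htop ▸ Order.height_mono this)
  obtain ⟨V, hV⟩ := key
  have hQfg : (P.comap (rnm V)).FG := IsNoetherian.noetherian _
  constructor
  · rw [← hV]
    have : extIdeal P V = (P.comap (rnm V)).map (rnm V).toRingHom := rfl
    rw [this]
    exact hQfg.map _
  · exact ⟨V, P.comap (rnm V), hV.symm⟩
end

section
/- Let A be a finitely generated k-algebra and U a set. If J is a finitely generated ideal of A[U][y], then the contraction A[U] ∩ J is also a finitely generated ideal of A[U]. -/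
open MvPolynomial

theorem fg_comap_equiv {R S : Type*} [CommRing R] [CommRing S] (e : R ≃+* S) {J : Ideal S}
    (hJ : J.FG) : (J.comap (e : R →+* S)).FG := by
  have h1 : J.comap (e : R →+* S) = J.map (e.symm : S →+* R) := by
    apply le_antisymm
    · intro x hx
      rw [Ideal.mem_comap] at hx
      have := Ideal.mem_map_of_mem (e.symm : S →+* R) hx
      simpa using this
    · rw [Ideal.map_le_iff_le_comap]
      intro y hy
      simp only [Ideal.mem_comap]
      simpa using hy
  rw [h1]
  exact hJ.map _

theorem key_comap_rename_fg {R σ τ : Type*} [CommRing R] [IsNoetherianRing R]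
    {f : σ → τ} (hf : Function.Injective f)
    (K : Ideal (MvPolynomial τ R)) (hK : K.FG) :
    (K.comap ((rename f : MvPolynomial σ R →ₐ[R] MvPolynomial τ R) :
      MvPolynomial σ R →+* MvPolynomial τ R)).FG := by
  classical
  obtain ⟨s, rfl⟩ := hK
  set F : Finset τ := s.sup MvPolynomial.vars with hFdef
  -- variable splittings
  let τ₁ := {x : τ // x ∈ F}
  let τ₂ := {x : τ // ¬ x ∈ F}
  let σ₁ := {x : σ // f x ∈ F}
  let σ₂ := {x : σ // ¬ f x ∈ F}
  let eτ : τ ≃ τ₂ ⊕ τ₁ := (Equiv.sumCompl (· ∈ F)).symm.trans (Equiv.sumComm _ _)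
  let eσ : σ ≃ σ₂ ⊕ σ₁ := (Equiv.sumCompl (fun x => f x ∈ F)).symm.trans (Equiv.sumComm _ _)
  let Φτ : MvPolynomial τ R ≃ₐ[R] MvPolynomial τ₂ (MvPolynomial τ₁ R) :=
    (renameEquiv R eτ).trans (sumAlgEquiv R τ₂ τ₁)
  let Φσ : MvPolynomial σ R ≃ₐ[R] MvPolynomial σ₂ (MvPolynomial σ₁ R) :=
    (renameEquiv R eσ).trans (sumAlgEquiv R σ₂ σ₁)
  let f₁ : σ₁ → τ₁ := fun x => ⟨f x.1, x.2⟩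
  let f₂ : σ₂ → τ₂ := fun x => ⟨f x.1, x.2⟩
  have hf₁ : Function.Injective f₁ := fun a b h => Subtype.ext (hf (congrArg Subtype.val h))
  haveI : Finite σ₁ := Finite.of_injective f₁ hf₁
  have hf₂ : Function.Injective f₂ := fun a b h => Subtype.ext (hf (congrArg Subtype.val h))
  let h₁ : MvPolynomial σ₁ R →+* MvPolynomial τ₁ R :=
    (rename f₁ : MvPolynomial σ₁ R →ₐ[R] MvPolynomial τ₁ R)
  let G : MvPolynomial σ₂ (MvPolynomial σ₁ R) →+* MvPolynomial τ₂ (MvPolynomial τ₁ R) :=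
    ((rename f₂ : MvPolynomial σ₂ (MvPolynomial τ₁ R) →ₐ[MvPolynomial τ₁ R]
        MvPolynomial τ₂ (MvPolynomial τ₁ R)) :
      MvPolynomial σ₂ (MvPolynomial τ₁ R) →+* _).comp (MvPolynomial.map h₁)
  -- computations of Φτ on X
  have hΦτ_X_mem : ∀ (t : τ) (h : t ∈ F), Φτ (X t) = C (X ⟨t, h⟩) := by
    intro t h
    show (sumAlgEquiv R τ₂ τ₁) (renameEquiv R eτ (X t)) = _
    rw [renameEquiv_apply, rename_X]
    have : eτ t = Sum.inr ⟨t, h⟩ := by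
      simp [eτ, Equiv.sumCompl_symm_apply_of_pos h]
    rw [this]
    simp [sumAlgEquiv_X_inr, sumToIter_Xr]
  have hΦτ_X_not : ∀ (t : τ) (h : ¬ t ∈ F), Φτ (X t) = X ⟨t, h⟩ := by
    intro t h
    show (sumAlgEquiv R τ₂ τ₁) (renameEquiv R eτ (X t)) = _
    rw [renameEquiv_apply, rename_X]
    have : eτ t = Sum.inl ⟨t, h⟩ := by
      simp [eτ, Equiv.sumCompl_symm_apply_of_neg h]
    rw [this]
    simp [sumAlgEquiv_X_inl, sumToIter_Xl]
  have hΦσ_X_mem : ∀ (x : σ) (h : f x ∈ F), Φσ (X x) = C (X ⟨x, h⟩) := by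
    intro x h
    show (sumAlgEquiv R σ₂ σ₁) (renameEquiv R eσ (X x)) = _
    rw [renameEquiv_apply, rename_X]
    have : eσ x = Sum.inr ⟨x, h⟩ := by
      simp [eσ, Equiv.sumCompl_symm_apply_of_pos (p := fun x => f x ∈ F) h]
    rw [this]
    simp [sumAlgEquiv_X_inr, sumToIter_Xr]
  have hΦσ_X_not : ∀ (x : σ) (h : ¬ f x ∈ F), Φσ (X x) = X ⟨x, h⟩ := by
    intro x h
    show (sumAlgEquiv R σ₂ σ₁) (renameEquiv R eσ (X x)) = _
    rw [renameEquiv_apply, rename_X]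
    have : eσ x = Sum.inl ⟨x, h⟩ := by
      simp [eσ, Equiv.sumCompl_symm_apply_of_neg (p := fun x => f x ∈ F) h]
    rw [this]
    simp [sumAlgEquiv_X_inl, sumToIter_Xl]
  -- commuting square
  have comm : ∀ p : MvPolynomial σ R, Φτ (rename f p) = G (Φσ p) := by
    have : (Φτ : MvPolynomial τ R →+* MvPolynomial τ₂ (MvPolynomial τ₁ R)).comp
        ((rename f : MvPolynomial σ R →ₐ[R] _) : MvPolynomial σ R →+* _) =
        G.comp (Φσ : MvPolynomial σ R →+* MvPolynomial σ₂ (MvPolynomial σ₁ R)) := by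
      apply MvPolynomial.ringHom_ext
      · intro r
        simp only [RingHom.comp_apply, RingHom.coe_coe, AlgHom.coe_coe, rename_C]
        rw [show ((C r : MvPolynomial τ R)) = algebraMap R _ r from rfl,
          show ((C r : MvPolynomial σ R)) = algebraMap R _ r from rfl,
          AlgEquiv.commutes, AlgEquiv.commutes]
        simp [G, algebraMap_eq, MvPolynomial.map_C, h₁, rename_C]
      · intro x
        simp only [RingHom.comp_apply, RingHom.coe_coe, AlgHom.coe_coe, rename_X]
        by_cases h : f x ∈ F
        · rw [hΦτ_X_mem _ h, hΦσ_X_mem _ h]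
          simp [G, MvPolynomial.map_C, h₁, rename_X, f₁]
        · rw [hΦτ_X_not _ h, hΦσ_X_not _ h]
          simp [G, rename_X, f₂]
    intro p
    exact RingHom.congr_fun this p
  -- Φτ on polynomials supported in F
  have hΦτ_renameval : ∀ g : MvPolynomial τ₁ R,
      Φτ (rename (Subtype.val : τ₁ → τ) g) = C g := by
    have : (Φτ : MvPolynomial τ R →+* MvPolynomial τ₂ (MvPolynomial τ₁ R)).comp
        ((rename (Subtype.val : τ₁ → τ) : MvPolynomial τ₁ R →ₐ[R] _) :
          MvPolynomial τ₁ R →+* _) =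
        (C : MvPolynomial τ₁ R →+* MvPolynomial τ₂ (MvPolynomial τ₁ R)) := by
      apply MvPolynomial.ringHom_ext
      · intro r
        simp only [RingHom.comp_apply, RingHom.coe_coe, AlgHom.coe_coe, rename_C]
        rw [show ((C r : MvPolynomial τ R)) = algebraMap R _ r from rfl, AlgEquiv.commutes]
        simp [algebraMap_eq]
      · intro t
        simp only [RingHom.comp_apply, RingHom.coe_coe, AlgHom.coe_coe, rename_X]
        rw [hΦτ_X_mem _ t.2]
    intro g
    exact RingHom.congr_fun this g
  -- lift the generators
  have hgen : ∀ g ∈ s, ∃ g' : MvPolynomial τ₁ R, rename (Subtype.val : τ₁ → τ) g' = g := by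
    intro g hg
    apply exists_rename_eq_of_vars_subset_range g (Subtype.val : τ₁ → τ) Subtype.val_injective
    intro v hv
    have : v ∈ F := Finset.le_sup (f := MvPolynomial.vars) hg hv
    exact ⟨⟨v, this⟩, rfl⟩
  choose t ht using hgen
  let K₁ : Ideal (MvPolynomial τ₁ R) := Ideal.span (Set.range fun g : s => t g.1 g.2)
  have hmapK : Ideal.map (Φτ : MvPolynomial τ R →+* MvPolynomial τ₂ (MvPolynomial τ₁ R)) (Ideal.span (s : Set (MvPolynomial τ R)))
      = Ideal.map (C : MvPolynomial τ₁ R →+* _) K₁ := by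
    rw [Ideal.map_span, Ideal.map_span]
    congr 1
    ext x
    constructor
    · rintro ⟨g, hg, rfl⟩
      refine ⟨t g hg, ⟨⟨g, hg⟩, rfl⟩, ?_⟩
      have h2 := hΦτ_renameval (t g hg)
      rw [ht g hg] at h2
      exact h2.symm
    · rintro ⟨y, ⟨⟨g, hg⟩, rfl⟩, rfl⟩
      refine ⟨g, hg, ?_⟩
      have h2 := hΦτ_renameval (t g hg)
      rw [ht g hg] at h2
      exact h2
  let I₁ : Ideal (MvPolynomial σ₁ R) := K₁.comap h₁
  -- main identification
  have main : (Ideal.span (s : Set (MvPolynomial τ R))).comap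
      ((rename f : MvPolynomial σ R →ₐ[R] MvPolynomial τ R) : MvPolynomial σ R →+* _) =
      (Ideal.map (C : MvPolynomial σ₁ R →+* _) I₁).comap (Φσ : MvPolynomial σ R →+* MvPolynomial σ₂ (MvPolynomial σ₁ R)) := by
    ext q
    simp only [Ideal.mem_comap, RingHom.coe_coe, AlgHom.coe_coe]
    have hbij : Function.Bijective
        ⇑(Φτ : MvPolynomial τ R →+* MvPolynomial τ₂ (MvPolynomial τ₁ R)) := Φτ.bijective
    have step1 : rename f q ∈ Ideal.span (s : Set (MvPolynomial τ R)) ↔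
        Φτ (rename f q) ∈ Ideal.map (Φτ : MvPolynomial τ R →+* MvPolynomial τ₂ (MvPolynomial τ₁ R))
          (Ideal.span (s : Set (MvPolynomial τ R))) := by
      constructor
      · exact fun h => Ideal.mem_map_of_mem _ h
      · intro h
        rw [← Ideal.comap_map_of_bijective _ hbij
          (I := Ideal.span (s : Set (MvPolynomial τ R)))]
        exact Ideal.mem_comap.mpr h
    rw [step1, hmapK, comm q, MvPolynomial.mem_map_C_iff]
    have step2 : (∀ m, (G (Φσ q)).coeff m ∈ K₁) ↔
        (∀ m, ((MvPolynomial.map h₁) (Φσ q)).coeff m ∈ K₁) := by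
      constructor
      · intro H m
        have := H (Finsupp.mapDomain f₂ m)
        rwa [show G (Φσ q) = rename f₂ ((MvPolynomial.map h₁) (Φσ q)) from rfl,
          coeff_rename_mapDomain f₂ hf₂] at this
      · intro H m
        rw [show G (Φσ q) = rename f₂ ((MvPolynomial.map h₁) (Φσ q)) from rfl]
        by_cases h : (rename f₂ ((MvPolynomial.map h₁) (Φσ q))).coeff m = 0
        · rw [h]; exact K₁.zero_mem
        · obtain ⟨u, hu, -⟩ := coeff_rename_ne_zero _ _ _ h
          rw [← hu, coeff_rename_mapDomain f₂ hf₂]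
          exact H u
    rw [step2]
    have step3 : (∀ m, ((MvPolynomial.map h₁) (Φσ q)).coeff m ∈ K₁) ↔
        Φσ q ∈ Ideal.map (C : MvPolynomial σ₁ R →+* _) I₁ := by
      rw [MvPolynomial.mem_map_C_iff]
      apply forall_congr'
      intro m
      rw [MvPolynomial.coeff_map]
      rfl
    rw [step3]
  rw [main]
  have hI₁fg : I₁.FG := IsNoetherian.noetherian I₁
  exact fg_comap_equiv Φσ.toRingEquiv (hI₁fg.map _)

theorem stmt14 {k A : Type*} [Field k] [CommRing A] [Algebra k A]
    [Algebra.FiniteType k A] (U : Type*)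
    (J : Ideal (Polynomial (MvPolynomial U A))) (hJ : J.FG) :
    (J.comap (Polynomial.C : MvPolynomial U A →+* Polynomial (MvPolynomial U A))).FG := by
  haveI : IsNoetherianRing A := Algebra.FiniteType.isNoetherianRing k A
  let e : MvPolynomial (Option U) A ≃ₐ[A] Polynomial (MvPolynomial U A) :=
    optionEquivLeft A U
  have hC : (Polynomial.C : MvPolynomial U A →+* Polynomial (MvPolynomial U A)) =
      ((e : MvPolynomial (Option U) A →+* Polynomial (MvPolynomial U A)).comp
        ((rename (some : U → Option U) : MvPolynomial U A →ₐ[A] MvPolynomial (Option U) A) :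
          MvPolynomial U A →+* MvPolynomial (Option U) A)) := by
    apply MvPolynomial.ringHom_ext
    · intro a
      simp [e, optionEquivLeft_C, rename_C]
    · intro u
      simp [e, optionEquivLeft_X_some, rename_X]
  rw [hC, ← Ideal.comap_comap]
  apply key_comap_rename_fg (Option.some_injective U)
  exact fg_comap_equiv e.toRingEquiv hJ
end
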